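/- If the pair (A,B) is controllable in the PBH sense and the pair (Q,A) is observable in the PBH sense, then the discrete-time Hamiltonian matrix H_d has no complex eigenvalue λ with |λ| = 1. -/

import Mathlib

open Matrix
open scoped ComplexOrder
open scoped MatrixOrder

private lemma mapC_neg {p q : ℕ} (M : Matrix (Fin p) (Fin q) ℝ) :
    (-M).map Complex.ofReal = -(M.map Complex.ofReal) := by
  ext i j; simp

private lemma mapC_add {p q : ℕ} (L M : Matrix (Fin p) (Fin q) ℝ) :
    (L + M).map Complex.ofReal = L.map Complex.ofReal + M.map Complex.ofReal := by
  ext i j; simp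

private lemma mapC_mul {p q r : ℕ} (L : Matrix (Fin p) (Fin q) ℝ) (M : Matrix (Fin q) (Fin r) ℝ) :
    (L * M).map Complex.ofReal = L.map Complex.ofReal * M.map Complex.ofReal :=
  Matrix.map_mul (f := Complex.ofRealHom)

private lemma star_mulVec_mapC {p q : ℕ} (M : Matrix (Fin p) (Fin q) ℝ) (u : Fin q → ℂ) :
    star ((M.map Complex.ofReal) *ᵥ u) = (M.map Complex.ofReal) *ᵥ (star u) := by
  funext i
  simp [Matrix.mulVec, dotProduct, star_sum, star_mul', Complex.conj_ofReal]

private lemma transpose_mulVec_dot {p q : ℕ} (M : Matrix (Fin p) (Fin q) ℂ)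
    (u : Fin p → ℂ) (w : Fin q → ℂ) : (Mᵀ *ᵥ u) ⬝ᵥ w = u ⬝ᵥ (M *ᵥ w) := by
  rw [Matrix.mulVec_transpose, Matrix.dotProduct_mulVec]

private lemma posSemidef_mapC {k : ℕ} {M : Matrix (Fin k) (Fin k) ℝ} (hM : M.PosSemidef) :
    (M.map Complex.ofReal).PosSemidef := by
  have h1 : CFC.sqrt M * CFC.sqrt M = M := CFC.sqrt_mul_sqrt_self M hM.nonneg
  have hherm : (CFC.sqrt M).IsHermitian := (CFC.sqrt_nonneg M).posSemidef.isHermitian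
  have h2 : M.map Complex.ofReal =
      ((CFC.sqrt M).map Complex.ofReal)ᴴ * ((CFC.sqrt M).map Complex.ofReal) := by
    conv_lhs => rw [← h1]
    rw [mapC_mul]
    congr 1
    ext i j
    have := hherm.apply i j
    simp only [Matrix.conjTranspose_apply, Matrix.map_apply, Complex.star_def,
      Complex.conj_ofReal]
    rw [show CFC.sqrt M j i = CFC.sqrt M i j by simpa using (hherm.apply j i).symm]
  rw [h2]
  exact Matrix.posSemidef_conjTranspose_mul_self _

/-- Under PBH controllability of `(A,B)` and PBH observability of
`(Q,A)`, the discrete-time Hamiltonian matrix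
`H_d = [[A + BR⁻¹BᵀA⁻ᵀQ, −BR⁻¹BᵀA⁻ᵀ], [−A⁻ᵀQ, A⁻ᵀ]]` has no complex eigenvalue on the
unit circle. -/
theorem discrete_hamiltonian_no_unit_circle_eigenvalue {n m : ℕ}
    (A Q : Matrix (Fin n) (Fin n) ℝ) (hA : IsUnit A) (hQ : Q.PosSemidef)
    (B : Matrix (Fin n) (Fin m) ℝ)
    (R : Matrix (Fin m) (Fin m) ℝ) (hR : R.PosDef)
    (hctrb : ∀ (l : ℂ) (y : Fin n → ℂ), y ≠ 0 →
      (A.map Complex.ofReal)ᵀ.mulVec y = l • y → (B.map Complex.ofReal)ᵀ.mulVec y ≠ 0)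
    (hobs : ∀ (l : ℂ) (x : Fin n → ℂ), x ≠ 0 →
      (A.map Complex.ofReal).mulVec x = l • x → (Q.map Complex.ofReal).mulVec x ≠ 0) :
    ∀ (l : ℂ) (v : Fin n ⊕ Fin n → ℂ), v ≠ 0 →
      ((Matrix.fromBlocks (A + B * R⁻¹ * Bᵀ * (Aᵀ)⁻¹ * Q) (-(B * R⁻¹ * Bᵀ * (Aᵀ)⁻¹))
          (-((Aᵀ)⁻¹ * Q)) ((Aᵀ)⁻¹)).map Complex.ofReal).mulVec v = l • v →
      ‖l‖ ≠ 1 := by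
  intro l v hv hev habs
  classical
  set Ac := A.map Complex.ofReal with hAcdef
  set Qc := Q.map Complex.ofReal with hQcdef
  set Bc := B.map Complex.ofReal with hBcdef
  set Wc := (R⁻¹).map Complex.ofReal with hWcdef
  set Gc := ((Aᵀ)⁻¹).map Complex.ofReal with hGcdef
  set x : Fin n → ℂ := v ∘ Sum.inl with hxdef
  set y : Fin n → ℂ := v ∘ Sum.inr with hydef
  -- basic invertibility facts
  have hAdet : IsUnit Aᵀ.det := by
    rw [Matrix.det_transpose]; exact (Matrix.isUnit_iff_isUnit_det A).mp hA
  have hAG : Acᵀ * Gc = 1 := by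
    rw [hAcdef, hGcdef, ← Matrix.transpose_map, ← mapC_mul,
      Matrix.mul_nonsing_inv _ hAdet]
    exact Matrix.map_one _ Complex.ofReal_zero Complex.ofReal_one
  have hRdet : IsUnit R.det := (Matrix.isUnit_iff_isUnit_det R).mp hR.isUnit
  have hRW : (R.map Complex.ofReal) * Wc = 1 := by
    rw [hWcdef, ← mapC_mul, Matrix.mul_nonsing_inv _ hRdet]
    exact Matrix.map_one _ Complex.ofReal_zero Complex.ofReal_one
  -- extract the two block equations
  rw [Matrix.fromBlocks_map, Matrix.fromBlocks_mulVec] at hev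
  have e1 : (A + B * R⁻¹ * Bᵀ * (Aᵀ)⁻¹ * Q).map Complex.ofReal *ᵥ x
      + (-(B * R⁻¹ * Bᵀ * (Aᵀ)⁻¹)).map Complex.ofReal *ᵥ y = l • x := by
    funext i; have h := congrFun hev (Sum.inl i); simp at h; exact h
  have e2 : (-((Aᵀ)⁻¹ * Q)).map Complex.ofReal *ᵥ x + Gc *ᵥ y = l • y := by
    funext i; have h := congrFun hev (Sum.inr i); simp at h; exact h
  set Tc := Bc * Wc * Bcᵀ with hTcdef
  have hTmap : (B * R⁻¹ * Bᵀ).map Complex.ofReal = Tc := by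
    rw [hTcdef, hBcdef, hWcdef, mapC_mul, mapC_mul, Matrix.transpose_map]
  -- rewrite block equations
  have e1' : Ac *ᵥ x = l • x + l • (Tc *ᵥ y) := by
    have hGy : Gc *ᵥ (y - Qc *ᵥ x) = l • y := by
      have : (-((Aᵀ)⁻¹ * Q)).map Complex.ofReal = -(Gc * Qc) := by
        rw [mapC_neg _, mapC_mul, hGcdef, hQcdef]
      rw [this] at e2
      rw [Matrix.mulVec_sub, Matrix.mulVec_mulVec]
      rw [Matrix.neg_mulVec] at e2
      linear_combination (norm := module) e2
    have h11 : (A + B * R⁻¹ * Bᵀ * (Aᵀ)⁻¹ * Q).map Complex.ofReal = Ac + Tc * Gc * Qc := by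
      rw [mapC_add, hAcdef]
      congr 1
      rw [show B * R⁻¹ * Bᵀ * (Aᵀ)⁻¹ * Q = (B * R⁻¹ * Bᵀ) * (Aᵀ)⁻¹ * Q by ring,
        mapC_mul, mapC_mul, hTmap, hGcdef, hQcdef]
    have h12 : (-(B * R⁻¹ * Bᵀ * (Aᵀ)⁻¹)).map Complex.ofReal = -(Tc * Gc) := by
      rw [mapC_neg _, mapC_mul, hTmap, hGcdef]
    rw [h11, h12] at e1
    have key : (Tc * Gc * Qc) *ᵥ x + (-(Tc * Gc)) *ᵥ y = -(l • (Tc *ᵥ y)) := by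
      rw [Matrix.neg_mulVec, ← Matrix.mulVec_mulVec (M := Tc * Gc) (N := Qc),
        ← Matrix.mulVec_mulVec (M := Tc) (N := Gc), ← Matrix.mulVec_mulVec (M := Tc) (N := Gc)]
      rw [← Matrix.mulVec_smul]
      rw [show l • y = Gc *ᵥ (y - Qc *ᵥ x) from hGy.symm]
      simp only [Matrix.mulVec_sub]
      module
    rw [Matrix.add_mulVec] at e1
    linear_combination (norm := module) e1 - key
  have e2' : y - Qc *ᵥ x = l • (Acᵀ *ᵥ y) := by
    have hGy : Gc *ᵥ (y - Qc *ᵥ x) = l • y := by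
      have : (-((Aᵀ)⁻¹ * Q)).map Complex.ofReal = -(Gc * Qc) := by
        rw [mapC_neg _, mapC_mul, hGcdef, hQcdef]
      rw [this] at e2
      rw [Matrix.mulVec_sub, Matrix.mulVec_mulVec]
      rw [Matrix.neg_mulVec] at e2
      linear_combination (norm := module) e2
    calc y - Qc *ᵥ x = 1 *ᵥ (y - Qc *ᵥ x) := by rw [Matrix.one_mulVec]
    _ = (Acᵀ * Gc) *ᵥ (y - Qc *ᵥ x) := by rw [hAG]
    _ = Acᵀ *ᵥ (Gc *ᵥ (y - Qc *ᵥ x)) := by rw [Matrix.mulVec_mulVec]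
    _ = Acᵀ *ᵥ (l • y) := by rw [hGy]
    _ = l • (Acᵀ *ᵥ y) := Matrix.mulVec_smul _ _ _
  -- scalar quantities
  set z : Fin m → ℂ := Bcᵀ *ᵥ y with hzdef
  set α : ℂ := star x ⬝ᵥ (Qc *ᵥ x) with hαdef
  set β : ℂ := star z ⬝ᵥ (Wc *ᵥ z) with hβdef
  set p : ℂ := star y ⬝ᵥ (Ac *ᵥ x) with hpdef
  have hTy : star y ⬝ᵥ (Tc *ᵥ y) = β := by
    rw [hTcdef, ← Matrix.mulVec_mulVec (M := Bc * Wc), ← Matrix.mulVec_mulVec (M := Bc)]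
    rw [← transpose_mulVec_dot Bc (star y)]
    rw [hBcdef, ← Matrix.transpose_map, ← star_mulVec_mapC Bᵀ y, Matrix.transpose_map]
  have hp : p = l * (star y ⬝ᵥ x) + l * β := by
    rw [hpdef, e1']
    simp only [dotProduct_add, dotProduct_smul, smul_eq_mul, hTy]
  have hQT : Qᵀ = Q := by
    rw [← Matrix.conjTranspose_eq_transpose_of_trivial]; exact hQ.isHermitian
  have hQsymm : Qcᵀ = Qc := by
    rw [hQcdef, ← Matrix.transpose_map, hQT]
  have hQstar : (Qc *ᵥ star x) ⬝ᵥ x = α := by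
    rw [← hQsymm, transpose_mulVec_dot, hαdef]
  have h2 : star y ⬝ᵥ x - α = (starRingEnd ℂ) l * p := by
    have hstar := congrArg star e2'
    rw [star_sub, star_smul] at hstar
    have hq : star (Qc *ᵥ x) = Qc *ᵥ star x := by
      rw [hQcdef]; exact star_mulVec_mapC Q x
    have ha : star (Acᵀ *ᵥ y) = Acᵀ *ᵥ star y := by
      rw [hAcdef, ← Matrix.transpose_map]
      exact star_mulVec_mapC Aᵀ y
    rw [hq, ha] at hstar
    have := congrArg (fun u => u ⬝ᵥ x) hstar
    simp only [sub_dotProduct, smul_dotProduct, smul_eq_mul] at this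
    rw [hQstar, transpose_mulVec_dot] at this
    simpa [hpdef, Complex.star_def] using this
  have hl1 : (starRingEnd ℂ) l * l = 1 := by
    rw [mul_comm, Complex.mul_conj, Complex.normSq_eq_norm_sq, habs]
    norm_num
  have hαβ : α + β = 0 := by
    rw [hp] at h2
    linear_combination -h2 - (star y ⬝ᵥ x + β) * hl1
  -- positivity
  have hQcP : Qc.PosSemidef := posSemidef_mapC hQ
  have hWcP : Wc.PosSemidef := posSemidef_mapC hR.inv.posSemidef
  have hαre : 0 ≤ α.re := hQcP.re_dotProduct_nonneg x
  have hβre : 0 ≤ β.re := hWcP.re_dotProduct_nonneg z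
  have hαim : α.im = 0 := by
    have hq : star (Qc *ᵥ x) = Qc *ᵥ star x := by
      rw [hQcdef]; exact star_mulVec_mapC Q x
    have hconj : (starRingEnd ℂ) α = α := by
      rw [← Complex.star_def, hαdef, ← Matrix.star_dotProduct, hq]
      exact hQstar.trans hαdef
    exact Complex.conj_eq_iff_im.mp hconj
  have hβim : β.im = 0 := by
    have hWT : (R⁻¹)ᵀ = R⁻¹ := by
      rw [← Matrix.conjTranspose_eq_transpose_of_trivial]; exact hR.inv.isHermitian
    have hWsymm : Wcᵀ = Wc := by
      rw [hWcdef, ← Matrix.transpose_map, hWT]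
    have hw : star (Wc *ᵥ z) = Wc *ᵥ star z := by
      rw [hWcdef]; exact star_mulVec_mapC R⁻¹ z
    have hWstar : (Wc *ᵥ star z) ⬝ᵥ z = β := by
      conv_lhs => rw [← hWsymm]
      rw [transpose_mulVec_dot]
    have hconj : (starRingEnd ℂ) β = β := by
      rw [← Complex.star_def, hβdef, ← Matrix.star_dotProduct, hw]
      exact hWstar.trans hβdef
    exact Complex.conj_eq_iff_im.mp hconj
  have hα0 : α = 0 := by
    have hre : α.re + β.re = 0 := by
      have := congrArg Complex.re hαβ
      simpa using this
    have : α.re = 0 := le_antisymm (by linarith) hαre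
    exact Complex.ext this hαim
  have hβ0 : β = 0 := by
    have := hαβ
    rw [hα0, zero_add] at this
    exact this
  -- conclude vanishing
  have hQx : Qc *ᵥ x = 0 := (hQcP.dotProduct_mulVec_zero_iff x).mp hα0
  have hWz : Wc *ᵥ z = 0 := (hWcP.dotProduct_mulVec_zero_iff z).mp hβ0
  have hz0 : z = 0 := by
    calc z = 1 *ᵥ z := (Matrix.one_mulVec z).symm
    _ = ((R.map Complex.ofReal) * Wc) *ᵥ z := by rw [hRW]
    _ = (R.map Complex.ofReal) *ᵥ (Wc *ᵥ z) := (Matrix.mulVec_mulVec _ _ _).symm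
    _ = 0 := by rw [hWz, Matrix.mulVec_zero]
  have hTy0 : Tc *ᵥ y = 0 := by
    rw [hTcdef, ← Matrix.mulVec_mulVec (M := Bc * Wc), ← hzdef, ← Matrix.mulVec_mulVec (M := Bc),
      hWz, Matrix.mulVec_zero]
  have hAx : Ac *ᵥ x = l • x := by rw [e1', hTy0, smul_zero, add_zero]
  have hAy : y = l • (Acᵀ *ᵥ y) := by
    rw [hQx, sub_zero] at e2'
    exact e2'
  by_cases hx0 : x = 0
  · have hy0 : y ≠ 0 := by
      intro h
      apply hv
      funext s
      cases s with
      | inl i => exact congrFun hx0 i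
      | inr i => exact congrFun h i
    have hl0 : l ≠ 0 := by
      intro h; rw [h] at habs; simpa using habs
    have hAty : Acᵀ *ᵥ y = l⁻¹ • y := by
      have := congrArg (fun u => l⁻¹ • u) hAy
      simp only [smul_smul, inv_mul_cancel₀ hl0, one_smul] at this
      exact this.symm
    exact hctrb l⁻¹ y hy0 hAty hz0
  · exact hobs l x hx0 hAx hQx
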